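/- If the kernel H is radial (H(x,y) depends only on x−y), then the far-field matrix A defined by blocks Ã[t,s] (equal to G[t,s] = (H(ctr(t)+x̃_k, ctr(s)+x̃_l))_{k,l} when dist(t,s) > 0 and zero otherwise), with leaf cells of a perfect octree on a cube and the same translated equispaced interpolation grid in each leaf, satisfies A_{k,l} = A_{k', l'} whenever k − l = k' − l' (componentwise in the 6-dimensional multi-index), i.e., A is block-Toeplitz. -/

import Mathlib

/-- Center of the leaf cell with index `c` in the regular `2^E × 2^E × 2^E`
decomposition of the cube of radius `rB` centered at the origin. -/
noncomputable def cellCenter (rB : ℝ) (E : ℕ) (c : Fin 3 → Fin (2 ^ E)) :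
    Fin 3 → ℝ :=
  fun i => -rB + rB * (2 * ((c i : ℕ) : ℝ) + 1) / 2 ^ E

/-- The `a`-th node of the `L × L × L` equispaced interpolation grid, given as an
offset from the cell center (the same grid is used in every leaf, up to
translation). -/
noncomputable def gridNode (rB : ℝ) (E L : ℕ) (a : Fin 3 → Fin L) : Fin 3 → ℝ :=
  fun i => (rB / 2 ^ E) * (-1 + 2 * ((a i : ℕ) : ℝ) / ((L : ℝ) - 1))

/-- Theorem 4.1: if `H` is radial (depends only on `x - y`), then the far-field matrix
`A` — whose block `Ã[t,s]` equals `(H(ctr t + x̃_k, ctr s + x̃_l))_{k,l}` for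
non-adjacent leaf cells and `0` for adjacent or equal cells — is block-Toeplitz:
`A_{k,l} = A_{k',l'}` whenever the componentwise 6-dimensional multi-index
differences agree. -/
theorem farfield_block_toeplitz (rB : ℝ) (hrB : 0 < rB) (E L : ℕ)
    (H : (Fin 3 → ℝ) → (Fin 3 → ℝ) → ℝ)
    (hrad : ∃ g : (Fin 3 → ℝ) → ℝ, ∀ x y, H x y = g (fun i => x i - y i))
    (A : Matrix ((Fin 3 → Fin (2 ^ E)) × (Fin 3 → Fin L))
                ((Fin 3 → Fin (2 ^ E)) × (Fin 3 → Fin L)) ℝ)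
    (hA : ∀ (t s : Fin 3 → Fin (2 ^ E)) (a b : Fin 3 → Fin L),
      A (t, a) (s, b) =
        if ∀ i, |((t i : ℕ) : ℤ) - ((s i : ℕ) : ℤ)| ≤ 1 then 0
        else H (fun i => cellCenter rB E t i + gridNode rB E L a i)
               (fun i => cellCenter rB E s i + gridNode rB E L b i))
    (t s t' s' : Fin 3 → Fin (2 ^ E)) (a b a' b' : Fin 3 → Fin L)
    (hcell : ∀ i, ((t i : ℕ) : ℤ) - ((s i : ℕ) : ℤ)
      = ((t' i : ℕ) : ℤ) - ((s' i : ℕ) : ℤ))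
    (hnode : ∀ i, ((a i : ℕ) : ℤ) - ((b i : ℕ) : ℤ)
      = ((a' i : ℕ) : ℤ) - ((b' i : ℕ) : ℤ)) :
    A (t, a) (s, b) = A (t', a') (s', b') := by
  obtain ⟨g, hg⟩ := hrad
  rw [hA, hA]
  have hcond : (∀ i, |((t i : ℕ) : ℤ) - ((s i : ℕ) : ℤ)| ≤ 1) ↔
      (∀ i, |((t' i : ℕ) : ℤ) - ((s' i : ℕ) : ℤ)| ≤ 1) := by
    constructor <;> intro h i <;> [rw [← hcell i]; rw [hcell i]] <;> exact h i
  by_cases h : ∀ i, |((t i : ℕ) : ℤ) - ((s i : ℕ) : ℤ)| ≤ 1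
  · rw [if_pos h, if_pos (hcond.mp h)]
  · rw [if_neg h, if_neg (fun h' => h (hcond.mpr h')), hg, hg]
    congr 1
    funext i
    have h1 : ((t i : ℕ) : ℝ) - ((s i : ℕ) : ℝ) = ((t' i : ℕ) : ℝ) - ((s' i : ℕ) : ℝ) := by
      exact_mod_cast hcell i
    have h2 : ((a i : ℕ) : ℝ) - ((b i : ℕ) : ℝ) = ((a' i : ℕ) : ℝ) - ((b' i : ℕ) : ℝ) := by
      exact_mod_cast hnode i
    simp only [cellCenter, gridNode]
    by_cases hL : ((L : ℝ) - 1) = 0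
    · rw [hL]
      simp
      linear_combination (2 * rB / 2 ^ E) * h1
    · field_simp
      linear_combination (2 * ((L:ℝ)-1)) * h1 + 2 * h2
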